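/- arXiv:2304.11941 — 2 statements merged into one kernel-verified Lean document; each statement's English description precedes it below -/
import Mathlib

section
/- Let G be a finite DAG with unique source s and unique sink t, and let p and q be two distinct vertices each lying on every path from s to t, with LP(p) < LP(q). Then every path from s to t visits p before q. -/
/-- `l` is a directed path from `s` to `v` in the digraph with adjacency relation `adj`. -/
def IsPathFrom {V : Type*} (adj : V → V → Prop) (s v : V) (l : List V) : Prop :=
  l ≠ [] ∧ l.Chain' adj ∧ l.head? = some s ∧ l.getLast? = some v

/-- `LP v` is the length (number of edges) of a longest directed path from `s` to `v`. -/
def IsLongestPathLen {V : Type*} (adj : V → V → Prop) (s : V) (LP : V → ℕ) : Prop :=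
  ∀ v, (∃ l, IsPathFrom adj s v l ∧ l.length - 1 = LP v) ∧
    ∀ l, IsPathFrom adj s v l → l.length - 1 ≤ LP v

/-- In a finite DAG with unique source `s` and unique sink `t`, if the two
distinct vertices `p` and `q` each lie on every `s`-`t` path and `LP p < LP q`, then every
`s`-`t` path visits `p` before `q` (the index of `p` is smaller than the index of `q`). -/
theorem partition_points_ordered {V : Type*} [Fintype V] [DecidableEq V]
    (adj : V → V → Prop) (s t p q : V)
    (hacyc : ∀ x, ¬ Relation.TransGen adj x x)
    (hsource : ∀ u, ¬ adj u s) (hsink : ∀ u, ¬ adj t u)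
    (LP : V → ℕ) (hLP : IsLongestPathLen adj s LP)
    (hpq : p ≠ q) (hLPpq : LP p < LP q)
    (hp : ∀ l, IsPathFrom adj s t l → p ∈ l)
    (hq : ∀ l, IsPathFrom adj s t l → q ∈ l) :
    ∀ l, IsPathFrom adj s t l → l.idxOf p < l.idxOf q := by
  intro l hl
  have hpl : p ∈ l := hp l hl
  have hql : q ∈ l := hq l hl
  set i := l.idxOf p with hi
  set j := l.idxOf q with hj
  have hil : i < l.length := List.idxOf_lt_length_iff.mpr hpl
  have hjl : j < l.length := List.idxOf_lt_length_iff.mpr hql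
  by_contra hcon
  push_neg at hcon
  have hne : j ≠ i := by
    intro h
    apply hpq
    have h1 : l.get ⟨i, hil⟩ = p := List.idxOf_get hil
    have h2 : l.get ⟨j, hjl⟩ = q := List.idxOf_get hjl
    rw [← h1, ← h2]
    congr 1
    exact Fin.ext h.symm
  have hji : j < i := lt_of_le_of_ne hcon hne
  -- the segment of l from index j to index i
  set m := (l.drop j).take (i - j + 1) with hm
  have hmlen : m.length = i - j + 1 := by
    simp [hm]
    omega
  have hgetp : l[i]? = some p := by
    rw [List.getElem?_eq_getElem hil]
    have h := List.idxOf_get hil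
    rw [List.get_eq_getElem] at h
    exact congrArg some h
  have hgetq : l[j]? = some q := by
    rw [List.getElem?_eq_getElem hjl]
    have h := List.idxOf_get hjl
    rw [List.get_eq_getElem] at h
    exact congrArg some h
  have hmhead : m.head? = some q := by
    rw [List.head?_eq_getElem?, hm, List.getElem?_take, if_pos (by omega),
      List.getElem?_drop]
    simpa using hgetq
  have hmlast : m.getLast? = some p := by
    rw [List.getLast?_eq_getElem?, hmlen]
    rw [hm, List.getElem?_take, if_pos (by omega), List.getElem?_drop]
    have : j + (i - j + 1 - 1) = i := by omega
    rw [this]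
    exact hgetp
  have hmchain : m.Chain' adj := by
    refine hl.2.1.infix ?_
    exact (List.take_prefix _ _).isInfix.trans (List.drop_suffix _ _).isInfix
  -- m = q :: rest
  obtain ⟨mh, rest, hmeq⟩ : ∃ a r, m = a :: r :=
    List.exists_cons_of_ne_nil (List.ne_nil_of_length_pos (by omega))
  have hmh : mh = q := by
    rw [hmeq] at hmhead; simpa using hmhead
  rw [hmh] at hmeq; clear hmh
  have hrlen : rest.length = i - j := by
    have := hmlen; rw [hmeq] at this; simpa using this
  have hrne : rest ≠ [] := by
    apply List.ne_nil_of_length_pos; omega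
  obtain ⟨r, hr⟩ := Option.isSome_iff_exists.mp (List.getLast?_isSome.mpr hrne)
  have hrlast : rest.getLast? = some p := by
    rw [hmeq, List.getLast?_cons, hr, Option.getD_some] at hmlast
    rw [hr]; exact hmlast
  -- longest path to q
  obtain ⟨L, hLpath, hLlen⟩ := (hLP q).1
  obtain ⟨hLne, hLchain, hLhead, hLlast⟩ := hLpath
  have hLl : L.length = LP q + 1 := by
    have : 1 ≤ L.length := List.length_pos_iff.mpr hLne
    omega
  -- concatenated path
  have hchain2 := List.isChain_cons.mp (hmeq ▸ hmchain)
  have hP : IsPathFrom adj s p (L ++ rest) := by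
    refine ⟨by simp [hLne], ?_, ?_, ?_⟩
    · refine List.isChain_append.mpr ⟨hLchain, hchain2.2, ?_⟩
      intro x hx y hy
      rw [hLlast] at hx
      simp at hx
      subst hx
      exact hchain2.1 y hy
    · rwa [List.head?_append_of_ne_nil _ hLne]
    · rwa [List.getLast?_append_of_ne_nil _ hrne]
  have := (hLP p).2 _ hP
  rw [List.length_append, hLl] at this
  have : 1 ≤ rest.length := List.length_pos_iff.mpr hrne
  omega
end

section
/- Let G be a finite DAG with unique source s and unique sink t where every vertex lies on an s-t path. The set of vertices that lie on every s-t path, ordered by topological depth LP, forms a chain: for any two such vertices p ≠ q, either every s-t path visits p before q or every s-t path visits q before p. -/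
private lemma getElem_idx_congr {α : Type*} (l : List α) {i j : ℕ} (h : i = j)
    (hi : i < l.length) : l[i] = l[j]'(h ▸ hi) := by subst h; rfl

private lemma chain'_transGen {V : Type*} {adj : V → V → Prop} {l : List V}
    (h : l.Chain' adj) :
    ∀ i j (hij : i < j) (hj : j < l.length),
      Relation.TransGen adj (l[i]'(by omega)) l[j] := by
  intro i j hij hj
  induction j with
  | zero => omega
  | succ j ih =>
    have hstep : adj (l[j]'(by omega)) l[j+1] := by
      have := List.isChain_iff_getElem.1 h j (by omega)
      simpa using this
    rcases Nat.lt_or_ge i j with h' | h'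
    · exact Relation.TransGen.tail (ih h' (by omega)) hstep
    · have hieq : i = j := by omega
      subst hieq
      exact Relation.TransGen.single hstep

private lemma path_nodup {V : Type*} {adj : V → V → Prop}
    (hacyc : ∀ x, ¬ Relation.TransGen adj x x) {l : List V}
    (h : l.Chain' adj) : l.Nodup := by
  rw [List.nodup_iff_injective_get]
  rintro ⟨i, hi⟩ ⟨j, hj⟩ hij
  simp only [List.get_eq_getElem] at hij
  by_contra hne
  have hne' : i ≠ j := fun hh => hne (Fin.ext hh)
  rcases Nat.lt_or_ge i j with h' | h'
  · have h3 := chain'_transGen h i j h' hj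
    rw [hij] at h3
    exact hacyc _ h3
  · have h'' : j < i := by omega
    have h3 := chain'_transGen h j i h'' hi
    rw [← hij] at h3
    exact hacyc _ h3

private lemma mem_take_indexOf_lt {V : Type*} [DecidableEq V] {l : List V} {a : V} {n : ℕ}
    (h : a ∈ l.take n) : l.idxOf a < n := by
  have h1 : l.idxOf a = (l.take n).idxOf a := by
    conv_lhs => rw [← List.take_append_drop n l]
    exact List.idxOf_append_of_mem h
  calc l.idxOf a = (l.take n).idxOf a := h1
    _ < (l.take n).length := List.idxOf_lt_length_iff.2 h
    _ ≤ n := by simp [List.length_take]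

/-- Splicing two paths: if `p` comes before `q` on `l₁` and `q` before `p` on `l₂`,
then gluing the prefix of `l₁` up to `p` with the suffix of `l₂` after `p` gives an
`s`-`t` path avoiding `q`. -/
private lemma splice {V : Type*} [DecidableEq V] {adj : V → V → Prop} {s t p q : V}
    {l1 l2 : List V}
    (h1 : IsPathFrom adj s t l1) (h2 : IsPathFrom adj s t l2)
    (n1 : l1.Nodup) (n2 : l2.Nodup)
    (hp1 : p ∈ l1) (hq1 : q ∈ l1) (hp2 : p ∈ l2) (hq2 : q ∈ l2)
    (h12 : l1.idxOf p < l1.idxOf q) (h21 : l2.idxOf q < l2.idxOf p) :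
    ∃ l, IsPathFrom adj s t l ∧ q ∉ l := by
  obtain ⟨hne1, hc1, hh1, hl1⟩ := h1
  obtain ⟨hne2, hc2, hh2, hl2⟩ := h2
  set i1 := l1.idxOf p with hi1def
  set i2 := l2.idxOf p with hi2def
  have hi1 : i1 < l1.length := List.idxOf_lt_length_iff.2 hp1
  have hi2 : i2 < l2.length := List.idxOf_lt_length_iff.2 hp2
  have hq1lt : l1.idxOf q < l1.length := List.idxOf_lt_length_iff.2 hq1
  have hgi1 : l1[i1] = p := List.getElem_idxOf hi1
  have hgi2 : l2[i2] = p := List.getElem_idxOf hi2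
  have hlen1pos : 0 < l1.length := List.length_pos_iff.2 hne1
  have hlen2pos : 0 < l2.length := List.length_pos_iff.2 hne2
  have hlast1 : l1[l1.length - 1]'(by omega) = t := by
    have h0 := List.getLast?_eq_getElem? (l := l1)
    rw [hl1, List.getElem?_eq_getElem (by omega)] at h0
    exact (Option.some.inj h0).symm
  have hlast2 : l2[l2.length - 1]'(by omega) = t := by
    have h0 := List.getLast?_eq_getElem? (l := l2)
    rw [hl2, List.getElem?_eq_getElem (by omega)] at h0
    exact (Option.some.inj h0).symm
  set A := l1.take (i1 + 1) with hAdef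
  set B := l2.drop (i2 + 1) with hBdef
  have hAlen : A.length = i1 + 1 := by
    simp only [hAdef, List.length_take]; omega
  have hAne : A ≠ [] := by
    intro h; rw [h] at hAlen; simp at hAlen
  have hi2succ : i2 + 1 < l2.length := by
    by_contra hcon
    have hieq : i2 = l2.length - 1 := by omega
    have hpt : p = t := by
      rw [← hgi2, getElem_idx_congr l2 hieq hi2, hlast2]
    have hidx1 : i1 = l1.length - 1 := by
      have hlen1 : l1.length - 1 < l1.length := by omega
      have heq : l1[i1] = l1[l1.length - 1]'hlen1 := by
        rw [hgi1, hlast1, hpt]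
      exact (n1.getElem_inj_iff (hi := hi1) (hj := hlen1)).1 heq
    omega
  have hheadB : B.head? = some (l2[i2 + 1]'hi2succ) := by
    rw [hBdef, List.head?_drop, List.getElem?_eq_getElem hi2succ]
  have hBne : B ≠ [] := by
    intro h; rw [h] at hheadB; simp at hheadB
  refine ⟨A ++ B, ⟨?_, ?_, ?_, ?_⟩, ?_⟩
  · simp [hAne]
  · rw [List.Chain', List.isChain_append]
    refine ⟨hc1.prefix (List.take_prefix _ _), hc2.suffix (List.drop_suffix _ _), ?_⟩
    intro x hx y hy
    have hlastA : A.getLast? = some p := by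
      rw [List.getLast?_eq_getElem?, hAlen]
      simp only [Nat.add_sub_cancel]
      have hlt : i1 < A.length := by omega
      rw [List.getElem?_eq_getElem hlt]
      have : A[i1]'hlt = l1[i1] := List.getElem_take
      rw [this, hgi1]
    rw [hlastA] at hx
    rw [hheadB] at hy
    simp only [Option.mem_def, Option.some.injEq] at hx hy
    subst hx; subst hy
    have hstep := List.isChain_iff_getElem.1 hc2 i2 (by omega)
    rwa [hgi2] at hstep
  · rw [List.head?_append_of_ne_nil _ hAne]
    cases l1 with
    | nil => exact absurd rfl hne1
    | cons a tl =>
      simp only [hAdef, List.take_succ_cons]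
      simpa using hh1
  · rw [List.getLast?_append]
    obtain ⟨c, hc⟩ := List.drop_suffix (i2 + 1) l2
    have h2' : (c ++ B).getLast? = some t := by rw [hc]; exact hl2
    rw [List.getLast?_append] at h2'
    have hBl : B.getLast? ≠ none := by
      simpa [List.getLast?_eq_none_iff] using hBne
    obtain ⟨b, hb⟩ := Option.ne_none_iff_exists'.1 hBl
    rw [hb] at h2' ⊢
    simpa using h2'
  · intro hmem
    rcases List.mem_append.1 hmem with hA | hB
    · have := mem_take_indexOf_lt hA
      omega
    · obtain ⟨k, hk, hbk⟩ := List.getElem_of_mem hB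
      have hklen : i2 + 1 + k < l2.length := by
        rw [hBdef, List.length_drop] at hk; omega
      have hbk' : l2[i2 + 1 + k]'hklen = q := by
        rw [← hbk]
        exact (List.getElem_drop (xs := l2)).symm
      have hq2lt : l2.idxOf q < l2.length := List.idxOf_lt_length_iff.2 hq2
      have hgq : l2[l2.idxOf q]'hq2lt = q := List.getElem_idxOf hq2lt
      have := (n2.getElem_inj_iff (hi := hklen) (hj := hq2lt)).1 (hbk'.trans hgq.symm)
      omega

/-- In a finite DAG with unique source `s` and unique sink `t` where every
vertex lies on an `s`-`t` path, the vertices lying on every `s`-`t` path form a chain: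
for any two distinct such vertices `p ≠ q`, either every `s`-`t` path visits `p` before
`q`, or every `s`-`t` path visits `q` before `p`. -/
theorem partition_points_form_chain {V : Type*} [Fintype V] [DecidableEq V]
    (adj : V → V → Prop) (s t : V)
    (hacyc : ∀ x, ¬ Relation.TransGen adj x x)
    (hsource : ∀ u, ¬ adj u s) (hsink : ∀ u, ¬ adj t u)
    (hcover : ∀ w, ∃ l, IsPathFrom adj s t l ∧ w ∈ l)
    (LP : V → ℕ) (hLP : IsLongestPathLen adj s LP) :
    ∀ p q, p ≠ q →
      (∀ l, IsPathFrom adj s t l → p ∈ l) →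
      (∀ l, IsPathFrom adj s t l → q ∈ l) →
      (∀ l, IsPathFrom adj s t l → l.idxOf p < l.idxOf q) ∨
      (∀ l, IsPathFrom adj s t l → l.idxOf q < l.idxOf p) := by
  intro p q hpq hp hq
  obtain ⟨l0, hl0, -⟩ := hcover s
  have hn0 : l0.Nodup := path_nodup hacyc hl0.2.1
  have hidx_ne : ∀ l : List V, IsPathFrom adj s t l → l.idxOf p ≠ l.idxOf q := by
    intro l hl heq
    have hpl := hp l hl
    have hql := hq l hl
    have hplt : l.idxOf p < l.length := List.idxOf_lt_length_iff.2 hpl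
    have hqlt : l.idxOf q < l.length := List.idxOf_lt_length_iff.2 hql
    have h1 : l[l.idxOf p]'hplt = p := List.getElem_idxOf hplt
    have h2 : l[l.idxOf q]'hqlt = q := List.getElem_idxOf hqlt
    exact hpq (h1 ▸ h2 ▸ (getElem_idx_congr l heq hplt))
  rcases Nat.lt_or_ge (l0.idxOf p) (l0.idxOf q) with h0 | h0
  · left
    intro l hl
    rcases Nat.lt_or_ge (l.idxOf p) (l.idxOf q) with h' | h'
    · exact h'
    · exfalso
      have h'' : l.idxOf q < l.idxOf p := lt_of_le_of_ne h' (hidx_ne l hl).symm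
      obtain ⟨l', hl', hql'⟩ := splice hl0 hl hn0 (path_nodup hacyc hl.2.1)
        (hp l0 hl0) (hq l0 hl0) (hp l hl) (hq l hl) h0 h''
      exact hql' (hq l' hl')
  · right
    have h0' : l0.idxOf q < l0.idxOf p := lt_of_le_of_ne h0 (hidx_ne l0 hl0).symm
    intro l hl
    rcases Nat.lt_or_ge (l.idxOf q) (l.idxOf p) with h' | h'
    · exact h'
    · exfalso
      have h'' : l.idxOf p < l.idxOf q := lt_of_le_of_ne h' (hidx_ne l hl)
      obtain ⟨l', hl', hpl'⟩ := splice hl0 hl hn0 (path_nodup hacyc hl.2.1)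
        (hq l0 hl0) (hp l0 hl0) (hq l hl) (hp l hl) h0' h''
      exact hpl' (hp l' hl')
end
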